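/- Let k ≥ 1 be an integer, γ > 0, λ₁,…,λ_k > 0, let U : ℝ → ℝ be continuously differentiable, and let h ∈ ℝ. If y, w ∈ ℝ^{k+2} satisfy G(y, w, h) = 0, then H(y) = H(w), where H(v, z, x) = ½v² + ½‖z‖² + U(x) + (γ/2)v x for (v, z, x) ∈ ℝ × ℝ^k × ℝ. In other words, the AVF discretization of the deterministic subsystem exactly preserves the Hamiltonian H. -/

import Mathlib

open scoped BigOperators

lemma ftc_aux (U : ℝ → ℝ) (hU : ContDiff ℝ 1 U) (a c : ℝ) :
    U (a + c) - U a = c * ∫ θ in (0:ℝ)..1, deriv U (a + θ * c) := by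
  have hd : ∀ θ ∈ Set.uIcc (0:ℝ) 1,
      HasDerivAt (fun t : ℝ => U (a + t * c)) (c * deriv U (a + θ * c)) θ := by
    intro θ _
    have hg : HasDerivAt (fun t : ℝ => a + t * c) c θ := by
      simpa using ((hasDerivAt_id θ).mul_const c).const_add a
    have hu : HasDerivAt U (deriv U (a + θ * c)) (a + θ * c) :=
      ((hU.differentiable one_ne_zero) (a + θ * c)).hasDerivAt
    simpa [mul_comm, Function.comp_def] using hu.comp θ hg
  have hcont : Continuous fun θ : ℝ => c * deriv U (a + θ * c) :=
    continuous_const.mul ((hU.continuous_deriv le_rfl).comp (by continuity))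
  have := intervalIntegral.integral_eq_sub_of_hasDerivAt hd
    (hcont.intervalIntegrable 0 1)
  simpa [intervalIntegral.integral_const_mul] using this.symm


/-- The defining map of the implicit AVF step for the quasi-Markovian GLE.
Index `0` is the `v`-component, indices `1,…,k` (written `ℓ.succ.castSucc` for `ℓ : Fin k`)
are the `z`-components, and index `k+1` (`Fin.last (k+1)`) is the `x`-component. -/
noncomputable def G (k : ℕ) (γ : ℝ) (lam : Fin k → ℝ) (U : ℝ → ℝ) (h : ℝ)
    (y w : EuclideanSpace ℝ (Fin (k + 2))) : EuclideanSpace ℝ (Fin (k + 2)) :=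
  (EuclideanSpace.equiv (Fin (k + 2)) ℝ).symm <| fun i =>
    Fin.cases
      (y 0 - w 0 + (γ * h / 4) * (y 0 + w 0)
        + h * (∫ θ in (0:ℝ)..1,
            deriv U (w (Fin.last (k + 1)) + θ * (y (Fin.last (k + 1)) - w (Fin.last (k + 1)))))
        - (h / 2) * ∑ ℓ : Fin k, lam ℓ * (y ℓ.succ.castSucc + w ℓ.succ.castSucc))
      (fun j =>
        Fin.lastCases
          (y (Fin.last (k + 1)) - w (Fin.last (k + 1))
            - (γ * h / 4) * (y (Fin.last (k + 1)) + w (Fin.last (k + 1)))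
            - (h / 2) * (y 0 + w 0))
          (fun ℓ =>
            y ℓ.succ.castSucc - w ℓ.succ.castSucc
              + (lam ℓ * h / 2) * (y 0 + w 0)
              + (γ * lam ℓ * h / 4) * (y (Fin.last (k + 1)) + w (Fin.last (k + 1))))
          j)
      i

lemma G_apply (k : ℕ) (γ : ℝ) (lam : Fin k → ℝ) (U : ℝ → ℝ) (h : ℝ)
    (y w : EuclideanSpace ℝ (Fin (k + 2))) (i : Fin (k + 2)) :
    G k γ lam U h y w i =
    Fin.cases
      (y 0 - w 0 + (γ * h / 4) * (y 0 + w 0)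
        + h * (∫ θ in (0:ℝ)..1,
            deriv U (w (Fin.last (k + 1)) + θ * (y (Fin.last (k + 1)) - w (Fin.last (k + 1)))))
        - (h / 2) * ∑ ℓ : Fin k, lam ℓ * (y ℓ.succ.castSucc + w ℓ.succ.castSucc))
      (fun j =>
        Fin.lastCases
          (y (Fin.last (k + 1)) - w (Fin.last (k + 1))
            - (γ * h / 4) * (y (Fin.last (k + 1)) + w (Fin.last (k + 1)))
            - (h / 2) * (y 0 + w 0))
          (fun ℓ =>
            y ℓ.succ.castSucc - w ℓ.succ.castSucc
              + (lam ℓ * h / 2) * (y 0 + w 0)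
              + (γ * lam ℓ * h / 4) * (y (Fin.last (k + 1)) + w (Fin.last (k + 1))))
          j)
      i := rfl

/-- The modified Hamiltonian `H(v,z,x) = ½v² + ½‖z‖² + U(x) + (γ/2) v x`
as a function on `ℝ^{k+2}`. -/
noncomputable def Hfun (k : ℕ) (γ : ℝ) (U : ℝ → ℝ)
    (Y : EuclideanSpace ℝ (Fin (k + 2))) : ℝ :=
  (1 / 2) * (Y 0) ^ 2 + (1 / 2) * ∑ ℓ : Fin k, (Y ℓ.succ.castSucc) ^ 2
    + U (Y (Fin.last (k + 1))) + (γ / 2) * Y 0 * Y (Fin.last (k + 1))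

/-- the AVF discretization of the deterministic subsystem exactly
preserves the modified Hamiltonian `H`. -/
theorem stmt_7 (k : ℕ) (hk : 1 ≤ k) (γ : ℝ) (hγ : 0 < γ)
    (lam : Fin k → ℝ) (hlam : ∀ ℓ, 0 < lam ℓ)
    (U : ℝ → ℝ) (hU : ContDiff ℝ 1 U) (h : ℝ)
    (y w : EuclideanSpace ℝ (Fin (k + 2)))
    (hG : G k γ lam U h y w = 0) :
    Hfun k γ U y = Hfun k γ U w := by
  have hGi : ∀ i, G k γ lam U h y w i = 0 := fun i => by rw [hG]; rfl
  have h0 : y 0 - w 0 + (γ * h / 4) * (y 0 + w 0)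
      + h * (∫ θ in (0:ℝ)..1,
          deriv U (w (Fin.last (k + 1)) + θ * (y (Fin.last (k + 1)) - w (Fin.last (k + 1)))))
      - (h / 2) * ∑ ℓ : Fin k, lam ℓ * (y ℓ.succ.castSucc + w ℓ.succ.castSucc) = 0 := by
    have := hGi 0
    simpa [G, Fin.cases_zero] using this
  have hz : ∀ ℓ : Fin k, y ℓ.succ.castSucc - w ℓ.succ.castSucc
      + (lam ℓ * h / 2) * (y 0 + w 0)
      + (γ * lam ℓ * h / 4) * (y (Fin.last (k + 1)) + w (Fin.last (k + 1))) = 0 := by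
    intro ℓ
    have := hGi ℓ.castSucc.succ
    rw [G_apply, Fin.cases_succ, Fin.lastCases_castSucc] at this
    exact this
  have hx : y (Fin.last (k + 1)) - w (Fin.last (k + 1))
      - (γ * h / 4) * (y (Fin.last (k + 1)) + w (Fin.last (k + 1)))
      - (h / 2) * (y 0 + w 0) = 0 := by
    have := hGi (Fin.last k).succ
    rw [G_apply, Fin.cases_succ, Fin.lastCases_last] at this
    exact this
  have hEU : U (y (Fin.last (k + 1))) - U (w (Fin.last (k + 1)))
      = (y (Fin.last (k + 1)) - w (Fin.last (k + 1)))
        * ∫ θ in (0:ℝ)..1,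
            deriv U (w (Fin.last (k + 1)) + θ * (y (Fin.last (k + 1)) - w (Fin.last (k + 1)))) := by
    have := ftc_aux U hU (w (Fin.last (k + 1)))
      (y (Fin.last (k + 1)) - w (Fin.last (k + 1)))
    simpa using this
  have hzsum : (∑ ℓ : Fin k, (y ℓ.succ.castSucc) ^ 2) - ∑ ℓ : Fin k, (w ℓ.succ.castSucc) ^ 2
      = (-(h / 2) * (y 0 + w 0)
          - (γ * h / 4) * (y (Fin.last (k + 1)) + w (Fin.last (k + 1))))
        * ∑ ℓ : Fin k, lam ℓ * (y ℓ.succ.castSucc + w ℓ.succ.castSucc) := by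
    rw [← Finset.sum_sub_distrib, Finset.mul_sum]
    refine Finset.sum_congr rfl fun ℓ _ => ?_
    linear_combination (y ℓ.succ.castSucc + w ℓ.succ.castSucc) * hz ℓ
  unfold Hfun
  linear_combination
    ((1 / 2) * (y 0 + w 0)
      + (γ / 4) * (y (Fin.last (k + 1)) + w (Fin.last (k + 1)))) * h0
    + ((γ / 4) * (y 0 + w 0)
        + ∫ θ in (0:ℝ)..1,
            deriv U (w (Fin.last (k + 1)) + θ * (y (Fin.last (k + 1)) - w (Fin.last (k + 1))))) * hx
    + hEU + (1 / 2) * hzsum
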